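/- Let k ≥ 1 and let 0 ≤ x_1 < x_2 < ⋯ < x_k be integers that are pairwise distinct modulo k. Then the function h(x) = x − Σ_{i : x_i ≤ x} ⌈(x − x_i)/k⌉ is the unique k-height whose set of ledges is {x_1, …, x_k}. -/

import Mathlib

def IsHeight (h : ℤ → ℤ) : Prop :=
  (∀ x : ℤ, x ≤ 0 → h x = x) ∧
  (∀ x : ℤ, h x - h (x - 1) = 0 ∨ h x - h (x - 1) = 1) ∧
  (∃ N : ℤ, ∀ x : ℤ, N ≤ x → h x = h (x - 1))

def IsKHeight (k : ℕ) (h : ℤ → ℤ) : Prop :=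
  IsHeight h ∧ Antitone (fun x : ℤ => h x - h (x - k))

def IsLedge (k : ℕ) (h : ℤ → ℤ) (x : ℤ) : Prop :=
  h (x + 1) - h (x + 1 - k) = h x - h (x - k) - 1

/-- The `k`-height with prescribed ledges. -/
noncomputable def heightOf (k : ℕ) (xs : Fin k → ℤ) (x : ℤ) : ℤ :=
  x - ∑ i ∈ Finset.univ.filter (fun i => xs i ≤ x), ⌈((x - xs i : ℚ)) / (k : ℚ)⌉

namespace Stmt3Aux

noncomputable def Cl (k : ℕ) (m : ℤ) : ℤ := ⌈(m : ℚ) / (k : ℚ)⌉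

variable {k : ℕ}

lemma Cl_zero : Cl k 0 = 0 := by simp [Cl]

lemma Cl_add_mul (hk : 0 < k) (a q : ℤ) : Cl k (a + k * q) = Cl k a + q := by
  have hk0 : (k : ℚ) ≠ 0 := by exact_mod_cast hk.ne'
  unfold Cl
  push_cast
  rw [add_div, mul_comm, mul_div_assoc, div_self hk0, mul_one, Int.ceil_add_intCast]

lemma Cl_one (hk : 0 < k) {m : ℤ} (h1 : 1 ≤ m) (h2 : m ≤ k) : Cl k m = 1 := by
  have hk0 : (0:ℚ) < k := by exact_mod_cast hk
  have hle : Cl k m ≤ 1 := Int.ceil_le.mpr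
    (by rw [Int.cast_one, div_le_one hk0]; exact_mod_cast h2)
  have hge : (0:ℤ) < Cl k m := Int.ceil_pos.mpr
    (div_pos (by exact_mod_cast h1) hk0)
  omega

lemma Cl_sub (hk : 0 < k) (m : ℤ) : Cl k (m - k) = Cl k m - 1 := by
  rw [show m - (k:ℤ) = m + k * (-1) by ring, Cl_add_mul hk]
  ring

lemma Cl_step (hk : 0 < k) (m : ℤ) :
    Cl k m - Cl k (m - 1) = if (k:ℤ) ∣ (m - 1) then 1 else 0 := by
  have hkz : (k:ℤ) ≠ 0 := by exact_mod_cast hk.ne'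
  set r := (m - 1) % k with hr
  set q := (m - 1) / k with hq
  have hdecomp : m - 1 = k * q + r := (Int.mul_ediv_add_emod _ _).symm
  have hr0 : 0 ≤ r := Int.emod_nonneg _ hkz
  have hrk : r < k := Int.emod_lt_of_pos _ (by exact_mod_cast hk)
  have h1 : Cl k m = q + 1 := by
    rw [show m = (r + 1) + k * q by omega, Cl_add_mul hk,
      Cl_one hk (by omega) (by omega)]
    ring
  have h2 : Cl k (m - 1) = (if r = 0 then 0 else 1) + q := by
    rw [show m - 1 = r + k * q by omega, Cl_add_mul hk]
    by_cases h : r = 0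
    · simp [h, Cl_zero]
    · rw [Cl_one hk (by omega) (by omega)]; simp [h]
  have hdvd : (k:ℤ) ∣ (m - 1) ↔ r = 0 := by
    rw [Int.dvd_iff_emod_eq_zero, hr]
  rw [h1, h2]
  by_cases h : r = 0 <;> simp [h, hdvd] <;> omega

noncomputable def Fa (k : ℕ) (xs : Fin k → ℤ) (i : Fin k) (x : ℤ) : ℤ :=
  if xs i ≤ x then Cl k (x - xs i) else 0

variable {xs : Fin k → ℤ}

lemma heightOf_eq (k : ℕ) (xs : Fin k → ℤ) (x : ℤ) :
    heightOf k xs x = x - ∑ i, Fa k xs i x := by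
  unfold heightOf Fa Cl
  rw [Finset.sum_filter]
  norm_num

lemma Fa_delta (hk : 0 < k) (i : Fin k) (x : ℤ) :
    Fa k xs i x - Fa k xs i (x - k) = if xs i < x then 1 else 0 := by
  unfold Fa
  rcases lt_trichotomy (xs i) x with h | h | h
  · rw [if_pos h.le, if_pos h]
    by_cases h2 : xs i ≤ x - k
    · rw [if_pos h2, show x - (k:ℤ) - xs i = (x - xs i) - k by ring, Cl_sub hk]
      ring
    · rw [if_neg h2, Cl_one hk (by omega) (by omega)]; ring
  · simp [h, Cl_zero, show ¬ (x ≤ x - (k:ℤ)) by omega, lt_irrefl]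
  · rw [if_neg (by omega), if_neg (by omega), if_neg (by omega)]
    ring

lemma Fa_step (hk : 0 < k) (i : Fin k) (x : ℤ) :
    Fa k xs i x - Fa k xs i (x - 1) =
      if xs i < x ∧ (k:ℤ) ∣ (x - 1 - xs i) then 1 else 0 := by
  unfold Fa
  rcases lt_trichotomy (xs i) x with h | h | h
  · rw [if_pos h.le, if_pos (by omega : xs i ≤ x - 1),
      show x - 1 - xs i = (x - xs i) - 1 by ring, Cl_step hk]
    rw [show x - xs i - 1 = x - 1 - xs i by ring]
    simp [h]
  · simp [h, Cl_zero, show ¬ (x ≤ x - (1:ℤ)) by omega, lt_irrefl]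
  · rw [if_neg (by omega), if_neg (by omega), if_neg (by push_neg; intro h2; omega)]
    ring

end Stmt3Aux

open Stmt3Aux in
/-- `heightOf k xs` is the unique `k`-height with ledges `x_1 < ⋯ < x_k`. -/
theorem stmt3 (k : ℕ) (hk : 0 < k) (xs : Fin k → ℤ) (hmono : StrictMono xs)
    (hnn : ∀ i, 0 ≤ xs i)
    (hdist : ∀ i j, i ≠ j → ¬ Int.ModEq (k : ℤ) (xs i) (xs j)) :
    IsKHeight k (heightOf k xs) ∧
    (∀ x : ℤ, IsLedge k (heightOf k xs) x ↔ ∃ i, xs i = x) ∧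
    (∀ g : ℤ → ℤ, IsKHeight k g → (∀ x : ℤ, IsLedge k g x ↔ ∃ i, xs i = x) →
      g = heightOf k xs) := by
  classical
  haveI : NeZero k := ⟨hk.ne'⟩
  -- the counting function
  set c : ℤ → ℕ := fun x => (Finset.univ.filter (fun i => xs i < x)).card with hc
  -- the k-step difference of heightOf
  have hdelta : ∀ x : ℤ, heightOf k xs x - heightOf k xs (x - k) = k - (c x : ℤ) := by
    intro x
    have e1 : ∀ i ∈ Finset.univ, Fa k xs i x - Fa k xs i (x - (k:ℤ))
        = if xs i < x then (1:ℤ) else 0 := fun i _ => Fa_delta hk i x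
    have e2 : (∑ i, Fa k xs i x) - (∑ i, Fa k xs i (x - (k:ℤ))) = (c x : ℤ) := by
      rw [← Finset.sum_sub_distrib, Finset.sum_congr rfl e1, Finset.sum_boole]
    rw [heightOf_eq, heightOf_eq]
    linarith [e2]
  -- the one-step difference of heightOf
  set s : ℤ → ℕ := fun x =>
    (Finset.univ.filter (fun i => xs i < x ∧ (k:ℤ) ∣ (x - 1 - xs i))).card with hs
  have hstep : ∀ x : ℤ, heightOf k xs x - heightOf k xs (x - 1) = 1 - (s x : ℤ) := by
    intro x
    have e1 : ∀ i ∈ Finset.univ, Fa k xs i x - Fa k xs i (x - 1)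
        = if xs i < x ∧ (k:ℤ) ∣ (x - 1 - xs i) then (1:ℤ) else 0 :=
      fun i _ => Fa_step hk i x
    have e2 : (∑ i, Fa k xs i x) - (∑ i, Fa k xs i (x - 1)) = (s x : ℤ) := by
      rw [← Finset.sum_sub_distrib, Finset.sum_congr rfl e1, Finset.sum_boole]
    rw [heightOf_eq, heightOf_eq]
    linarith [e2]
  have hsle : ∀ x : ℤ, s x ≤ 1 := by
    intro x
    apply Finset.card_le_one.mpr
    intro a ha b hb
    simp only [Finset.mem_filter, Finset.mem_univ, true_and] at ha hb
    by_contra hne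
    have hd : (k:ℤ) ∣ xs b - xs a := by
      have := dvd_sub ha.2 hb.2
      rwa [show x - 1 - xs a - (x - 1 - xs b) = xs b - xs a by ring] at this
    exact hdist a b hne (Int.modEq_iff_dvd.mpr hd)
  have hinc : ∀ x : ℤ, heightOf k xs x - heightOf k xs (x - 1) = 0 ∨
      heightOf k xs x - heightOf k xs (x - 1) = 1 := by
    intro x
    have h1 := hstep x
    have h2 := hsle x
    omega
  -- heightOf agrees with id on nonpositives
  have hzero : ∀ x : ℤ, x ≤ 0 → heightOf k xs x = x := by
    intro x hx
    unfold heightOf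
    rw [Finset.sum_eq_zero, sub_zero]
    intro i hi
    simp only [Finset.mem_filter, Finset.mem_univ, true_and] at hi
    have h1 : xs i = x := by have := hnn i; omega
    rw [h1]
    simp
  -- surjectivity of residues
  have hinj : Function.Injective (fun i : Fin k => ((xs i : ZMod k))) := by
    intro a b hab
    by_contra hne
    exact hdist a b hne ((ZMod.intCast_eq_intCast_iff _ _ _).mp hab)
  have hsurj : Function.Surjective (fun i : Fin k => ((xs i : ZMod k))) :=
    ((Fintype.bijective_iff_injective_and_card _).mpr ⟨hinj, by simp [ZMod.card]⟩).2
  -- maximum of xs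
  have hne0 : (Finset.univ : Finset (Fin k)).Nonempty := ⟨⟨0, hk⟩, Finset.mem_univ _⟩
  set M : ℤ := Finset.univ.sup' hne0 xs with hM
  have hleM : ∀ i, xs i ≤ M := fun i => Finset.le_sup' xs (Finset.mem_univ i)
  -- eventually constant
  have hconst : ∀ x : ℤ, M + 1 ≤ x → heightOf k xs x = heightOf k xs (x - 1) := by
    intro x hx
    obtain ⟨i, hi⟩ := hsurj (((x - 1 : ℤ) : ZMod k))
    have hdvd : (k:ℤ) ∣ (x - 1 - xs i) :=
      (ZMod.intCast_eq_intCast_iff_dvd_sub _ _ _).mp hi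
    have hlt : xs i < x := by have := hleM i; omega
    have hpos : 0 < s x := Finset.card_pos.mpr
      ⟨i, Finset.mem_filter.mpr ⟨Finset.mem_univ _, hlt, hdvd⟩⟩
    have := hstep x
    have := hsle x
    omega
  -- splitting the count at x
  have hcsucc : ∀ x : ℤ, c (x + 1) = c x + (Finset.univ.filter (fun i => xs i = x)).card := by
    intro x
    have h1 : (Finset.univ.filter (fun i => xs i < x + 1))
        = (Finset.univ.filter (fun i => xs i < x ∨ xs i = x)) :=
      Finset.filter_congr (fun i _ => by constructor <;> intro <;> omega)
    have hdisj : Disjoint (Finset.univ.filter (fun i => xs i < x))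
        (Finset.univ.filter (fun i => xs i = x)) := by
      apply Finset.disjoint_left.mpr
      intro a ha hb
      simp only [Finset.mem_filter, Finset.mem_univ, true_and] at ha hb
      omega
    simp only [hc]
    rw [h1, Finset.filter_or, Finset.card_union_of_disjoint hdisj]
  have heqle : ∀ x : ℤ, (Finset.univ.filter (fun i => xs i = x)).card ≤ 1 := by
    intro x
    apply Finset.card_le_one.mpr
    intro a ha b hb
    simp only [Finset.mem_filter, Finset.mem_univ, true_and] at ha hb
    exact hmono.injective (ha.trans hb.symm)
  have heqpos : ∀ x : ℤ, (∃ i, xs i = x) ↔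
      0 < (Finset.univ.filter (fun i => xs i = x)).card := by
    intro x
    rw [Finset.card_pos, Finset.filter_nonempty_iff]
    constructor
    · rintro ⟨i, hi⟩; exact ⟨i, Finset.mem_univ _, hi⟩
    · rintro ⟨i, _, hi⟩; exact ⟨i, hi⟩
  -- the ledge characterization of heightOf
  have hledge : ∀ x : ℤ, IsLedge k (heightOf k xs) x ↔ ∃ i, xs i = x := by
    intro x
    unfold IsLedge
    rw [hdelta (x + 1), hdelta x, hcsucc x, heqpos x]
    have := heqle x
    constructor
    · intro hE; push_cast at hE; omega
    · intro hE; push_cast; omega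
  -- antitone
  have hanti : Antitone (fun x : ℤ => heightOf k xs x - heightOf k xs (x - (k:ℤ))) := by
    intro a b hab
    simp only
    rw [hdelta a, hdelta b]
    have hsub : c a ≤ c b := Finset.card_le_card
      (Finset.monotone_filter_right _ (fun i _ hi => lt_of_lt_of_le hi hab))
    omega
  refine ⟨⟨⟨hzero, hinc, ⟨M + 1, hconst⟩⟩, hanti⟩, hledge, ?_⟩
  -- uniqueness
  intro g hg hgl
  obtain ⟨⟨hg0, hg1, _⟩, hganti⟩ := hg
  have hfe : ∀ x : ℤ, x ≤ 0 → c x = 0 := by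
    intro x hx
    simp only [hc, Finset.card_eq_zero]
    apply Finset.filter_eq_empty_iff.mpr
    intro i _
    have := hnn i; omega
  have hD : ∀ x : ℤ, g x - g (x - (k:ℤ)) = k - (c x : ℤ) := by
    have key : ∀ x : ℤ, 0 ≤ x → g x - g (x - (k:ℤ)) = k - (c x : ℤ) := by
      refine fun x hx => Int.le_induction (motive := fun y _ => g y - g (y - (k:ℤ)) = k - (c y : ℤ)) ?_ ?_ x hx
      · show g 0 - g (0 - (k:ℤ)) = k - (c 0 : ℤ)
        rw [hg0 0 le_rfl, hg0 (0 - (k:ℤ)) (by omega), hfe 0 le_rfl]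
        push_cast; ring
      · intro n hn ih
        have hmono1 : g (n + 1) - g n = 0 ∨ g (n + 1) - g n = 1 := by
          have := hg1 (n + 1); rwa [show n + 1 - 1 = n by ring] at this
        have hmono2 : g (n + 1 - (k:ℤ)) - g (n - (k:ℤ)) = 0 ∨
            g (n + 1 - (k:ℤ)) - g (n - (k:ℤ)) = 1 := by
          have := hg1 (n + 1 - (k:ℤ))
          rwa [show n + 1 - (k:ℤ) - 1 = n - (k:ℤ) by ring] at this
        have hanti2 : g (n + 1) - g (n + 1 - (k:ℤ)) ≤ g n - g (n - (k:ℤ)) :=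
          hganti (show n ≤ n + 1 by omega)
        have hcs := hcsucc n
        by_cases hex : ∃ i, xs i = n
        · have hl : IsLedge k g n := (hgl n).mpr hex
          unfold IsLedge at hl
          have he : (Finset.univ.filter (fun i => xs i = n)).card = 1 := by
            have h5 := heqle n
            have h6 := (heqpos n).mp hex
            omega
          have hc1 : c (n + 1) = c n + 1 := by rw [hcs, he]
          omega
        · have hnl : ¬ IsLedge k g n := fun h => hex ((hgl n).mp h)
          unfold IsLedge at hnl
          have he : (Finset.univ.filter (fun i => xs i = n)).card = 0 := by
            rcases Nat.eq_zero_or_pos ((Finset.univ.filter (fun i => xs i = n)).card) with h | h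
            · exact h
            · exact absurd ((heqpos n).mpr h) hex
          have hc0 : c (n + 1) = c n := by rw [hcs, he]; omega
          omega
    intro x
    rcases le_or_gt x 0 with hx | hx
    · rw [hg0 x hx, hg0 (x - (k:ℤ)) (by omega), hfe x hx]
      push_cast; ring
    · exact key x hx.le
  have hDD : ∀ x : ℤ, g x - heightOf k xs x
      = g (x - (k:ℤ)) - heightOf k xs (x - (k:ℤ)) := by
    intro x
    have h1 := hD x
    have h2 := hdelta x
    omega
  have hall : ∀ n : ℕ, ∀ x : ℤ, x ≤ n → g x = heightOf k xs x := by
    intro n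
    induction n with
    | zero =>
      intro x hx
      have hx0 : x ≤ 0 := by exact_mod_cast hx
      rw [hg0 x hx0, hzero x hx0]
    | succ n ih =>
      intro x hx
      rcases le_or_gt x n with h | h
      · exact ih x h
      · have h1 := hDD x
        have h2 : g (x - (k:ℤ)) = heightOf k xs (x - (k:ℤ)) := ih (x - (k:ℤ)) (by omega)
        omega
  funext x
  exact hall x.toNat x (Int.self_le_toNat x)
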